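/- If two finite CW complexes Y and Y' are cell equivalent (in the symmetric sense), then their face posets are isomorphic as partially ordered sets. -/

import Mathlib

/-- A finite CW complex, abstracted as a topological space together with a
finite set of (open) cells, each with a dimension. -/
structure FinCW where
  carrier : Type
  top : TopologicalSpace carrier
  cell : Type
  fin : Fintype cell
  cells : cell → Set carrier
  dim : cell → ℕ

attribute [instance] FinCW.top FinCW.fin

namespace FinCW

/-- The face relation on cells: the transitive (and reflexive) closure of
`e' ≤ e` iff the closure of the cell `e` meets the cell `e'`. -/
def cellLE (Y : FinCW) : Y.cell → Y.cell → Prop :=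
  Relation.ReflTransGen fun e' e => (closure (Y.cells e) ∩ Y.cells e').Nonempty

/-- The base `Y(e)` of a cell: the union of all cells `e' ≤ e`. -/
def base (Y : FinCW) (e : Y.cell) : Set Y.carrier :=
  ⋃ e' ∈ {e' | Y.cellLE e' e}, Y.cells e'

/-- Symmetric cell equivalence: homotopy inverse maps `f, g` together with a
bijection of cells, such that `f` maps each base onto the corresponding base,
`g` maps it back, and the restrictions are homotopy inverses of each other. -/
def CellEquiv (Y Y' : FinCW) : Prop :=
  ∃ (f : C(Y.carrier, Y'.carrier)) (g : C(Y'.carrier, Y.carrier))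
    (φ : Y.cell ≃ Y'.cell),
    (f.comp g).Homotopic (ContinuousMap.id _) ∧
    (g.comp f).Homotopic (ContinuousMap.id _) ∧
    ∀ e : Y.cell,
      f '' Y.base e = Y'.base (φ e) ∧
      g '' Y'.base (φ e) = Y.base e ∧
      ∃ (fr : C(↥(Y.base e), ↥(Y'.base (φ e))))
        (gr : C(↥(Y'.base (φ e)), ↥(Y.base e))),
        (∀ x : ↥(Y.base e), (fr x : Y'.carrier) = f x) ∧
        (∀ y : ↥(Y'.base (φ e)), (gr y : Y.carrier) = g y) ∧
        (fr.comp gr).Homotopic (ContinuousMap.id _) ∧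
        (gr.comp fr).Homotopic (ContinuousMap.id _)

lemma cells_subset_base (Y : FinCW) (a : Y.cell) : Y.cells a ⊆ Y.base a :=
  fun x hx => Set.mem_biUnion (Relation.ReflTransGen.refl) hx

lemma base_nonempty_iff (Y : FinCW) (a : Y.cell) :
    (Y.base a).Nonempty ↔ (Y.cells a).Nonempty := by
  constructor
  · rintro ⟨x, hx⟩
    simp only [base, Set.mem_iUnion, Set.mem_setOf_eq] at hx
    obtain ⟨e', he', hxe⟩ := hx
    rcases Relation.ReflTransGen.cases_tail he' with heq | ⟨c, _, hstep⟩
    · exact ⟨x, heq ▸ hxe⟩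
    · obtain ⟨y, hy, _⟩ := hstep
      exact closure_nonempty_iff.mp ⟨y, hy⟩
  · rintro ⟨x, hx⟩
    exact ⟨x, Y.cells_subset_base a hx⟩

lemma base_mono (Y : FinCW) {a b : Y.cell} (h : Y.cellLE a b) :
    Y.base a ⊆ Y.base b := by
  intro x hx
  simp only [base, Set.mem_iUnion, Set.mem_setOf_eq] at hx ⊢
  obtain ⟨e', he', hxe⟩ := hx
  exact ⟨e', he'.trans h, hxe⟩

lemma cellLE_iff (Y : FinCW) (a b : Y.cell) :
    Y.cellLE a b ↔ a = b ∨ ((Y.cells a).Nonempty ∧ Y.base a ⊆ Y.base b) := by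
  constructor
  · intro h
    rcases Relation.ReflTransGen.cases_head h with heq | ⟨c, hstep, _⟩
    · exact Or.inl heq
    · obtain ⟨y, _, hy⟩ := hstep
      exact Or.inr ⟨⟨y, hy⟩, Y.base_mono h⟩
  · rintro (rfl | ⟨⟨x, hx⟩, hsub⟩)
    · exact Relation.ReflTransGen.refl
    · have hxb : x ∈ Y.base b := hsub (Y.cells_subset_base a hx)
      simp only [base, Set.mem_iUnion, Set.mem_setOf_eq] at hxb
      obtain ⟨e', he', hxe⟩ := hxb
      exact (Relation.ReflTransGen.single ⟨x, subset_closure hxe, hx⟩).trans he'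

end FinCW

/-- If two finite CW complexes are cell equivalent (in the symmetric sense),
then their face posets are isomorphic: there is a bijection of cells
preserving the face relation in both directions. -/
theorem cellEquiv_facePoset_iso (Y Y' : FinCW) (h : FinCW.CellEquiv Y Y') :
    ∃ φ : Y.cell ≃ Y'.cell, ∀ a b : Y.cell,
      Y.cellLE a b ↔ Y'.cellLE (φ a) (φ b) := by
  obtain ⟨f, g, φ, -, -, hb⟩ := h
  refine ⟨φ, fun a b => ?_⟩
  have hfA := (hb a).1
  have hfB := (hb b).1
  have hgA := (hb a).2.1
  have hgB := (hb b).2.1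
  rw [Y.cellLE_iff, Y'.cellLE_iff]
  constructor
  · rintro (rfl | ⟨hne, hsub⟩)
    · exact Or.inl rfl
    · refine Or.inr ⟨?_, ?_⟩
      · rw [← Y'.base_nonempty_iff, ← hfA]
        exact ((Y.base_nonempty_iff a).mpr hne).image f
      · rw [← hfA, ← hfB]
        exact Set.image_mono hsub
  · rintro (heq | ⟨hne, hsub⟩)
    · exact Or.inl (φ.injective heq)
    · refine Or.inr ⟨?_, ?_⟩
      · rw [← Y.base_nonempty_iff, ← hgA]
        exact ((Y'.base_nonempty_iff (φ a)).mpr hne).image g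
      · rw [← hgA, ← hgB]
        exact Set.image_mono hsub
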